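/- Let O be a complete discrete valuation ring with maximal ideal (π) and algebraically closed residue field k of characteristic p. Let σ be a ring automorphism of O fixing π and inducing a positive power of the Frobenius automorphism on k. Then for every m ≥ 1, the map GL_m(O) → GL_m(O) given by A ↦ A⁻¹ · σ(A) (where σ is applied entrywise) is surjective. -/

import Mathlib

set_option linter.unusedSectionVars false
set_option maxHeartbeats 1000000

open Polynomial Matrix IsLocalRing


section FieldAux
variable {k : Type*} [Field k] [IsAlgClosed k] {q : ℕ}

lemma exists_pow_eq (hq1 : 1 < q) (a : k) : ∃ x : k, x ^ q = a :=
  IsAlgClosed.exists_pow_nat_eq a (by omega)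

lemma exists_pow_sub_eq (hq1 : 1 < q) (a : k) : ∃ x : k, x ^ q - x = a := by
  have hdeg : (X ^ q - (X + C a) : k[X]).degree = q := by
    rw [degree_sub_eq_left_of_degree_lt, degree_X_pow]
    rw [degree_X_pow]
    calc (X + C a : k[X]).degree ≤ 1 := by
          apply (degree_add_le _ _).trans
          simp only [degree_X, le_refl, max_le_iff, true_and]
          exact degree_C_le.trans (by norm_num)
        _ < (q : ℕ) := by exact_mod_cast Nat.one_lt_cast.mpr hq1
  obtain ⟨x, hx⟩ := IsAlgClosed.exists_root (X ^ q - (X + C a) : k[X]) (by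
    rw [hdeg]; exact_mod_cast (by omega : q ≠ 0))
  refine ⟨x, ?_⟩
  simp only [IsRoot, eval_sub, eval_add, eval_pow, eval_X, eval_C] at hx
  linear_combination hx

variable (hadd : ∀ x y : k, (x + y) ^ q = x ^ q + y ^ q)
include hadd

lemma pow_q_inj (hq1 : 1 < q) {x y : k} (h : x ^ q = y ^ q) : x = y := by
  have h0 : (x - y) ^ q = 0 := by
    have h2 := hadd (x - y) y
    rw [sub_add_cancel, h] at h2
    linear_combination -h2
  have := pow_eq_zero_iff (n := q) (by omega) |>.mp h0
  exact sub_eq_zero.mp this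

lemma exists_semilinear_fixed_vector (hq1 : 1 < q) {N : ℕ} (hN : 0 < N)
    (B : Matrix (Fin N) (Fin N) k) (hB : IsUnit B.det) :
    ∃ v : Fin N → k, v ≠ 0 ∧ (fun i => v i ^ q) = v ᵥ* B := by
  classical
  have hq0 : q ≠ 0 := by omega
  -- the semilinear map ψ
  set ψ : (Fin N → k) →+ (Fin N → k) :=
    { toFun := fun v => (fun i => v i ^ q) ᵥ* B⁻¹
      map_zero' := by
        have : (fun i : Fin N => (0 : k) ^ q) = 0 := by
          funext i; exact zero_pow hq0
        simp only [Pi.zero_apply, this, Matrix.zero_vecMul]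
      map_add' := by
        intro u v
        have : (fun i : Fin N => (u + v) i ^ q) =
            (fun i => u i ^ q) + (fun i => v i ^ q) := by
          funext i; exact hadd (u i) (v i)
        simp only [this, Matrix.add_vecMul] } with hψdef
  have hψ : ∀ v : Fin N → k, ψ v = (fun i => v i ^ q) ᵥ* B⁻¹ := fun _ => rfl
  have hψs : ∀ (a : k) (v : Fin N → k), ψ (a • v) = a ^ q • ψ v := by
    intro a v
    rw [hψ, hψ]
    have : (fun i : Fin N => (a • v) i ^ q) = (a ^ q) • fun i => v i ^ q := by
      funext i; simp [mul_pow]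
    rw [this, Matrix.smul_vecMul]
  have hψinj : Function.Injective ψ := by
    intro u v huv
    rw [hψ, hψ] at huv
    have h2 := congrArg (fun w => w ᵥ* B) huv
    simp only [Matrix.vecMul_vecMul, Matrix.nonsing_inv_mul B hB, Matrix.vecMul_one] at h2
    funext i
    exact pow_q_inj hadd hq1 (congrFun h2 i)
  -- the iterated sequence
  set w : Fin N → k := Pi.single ⟨0, hN⟩ 1 with hw
  have hwne : w ≠ 0 := by
    intro h
    have := congrFun h ⟨0, hN⟩
    simp [hw] at this
  set F : ℕ → (Fin N → k) := fun s => (⇑ψ)^[s] w with hFdef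
  have hF : ∀ s, F (s + 1) = ψ (F s) := fun s => Function.iterate_succ_apply' _ s w
  -- existence of a first linear dependence
  have hex : ∃ j, F j ∈ Submodule.span k (F '' Set.Iio j) := by
    by_contra hcon
    push_neg at hcon
    set W : ℕ → Submodule k (Fin N → k) := fun j => Submodule.span k (F '' Set.Iio j) with hW
    have hlt : ∀ j, W j < W (j + 1) := by
      intro j
      refine lt_of_le_of_ne (Submodule.span_mono (Set.image_mono fun x hx => lt_trans hx (Nat.lt_succ_self j))) ?_
      intro he
      apply hcon j
      have hmem : F j ∈ Submodule.span k (F '' Set.Iio (j + 1)) :=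
        Submodule.subset_span ⟨j, Nat.lt_succ_self j, rfl⟩
      exact (show Submodule.span k (F '' Set.Iio j) = Submodule.span k (F '' Set.Iio (j+1)) from he) ▸ hmem
    have hrank : ∀ j, j ≤ Module.finrank k (W j) := by
      intro j
      induction j with
      | zero => exact Nat.zero_le _
      | succ j ih =>
        have := Submodule.finrank_lt_finrank_of_lt (hlt j)
        omega
    have h1 := hrank (N + 1)
    have h2 : Module.finrank k (W (N + 1)) ≤ N := by
      have := Submodule.finrank_le (W (N + 1))
      simpa [Module.finrank_pi] using this
    omega
  obtain ⟨r, hrspec, hmin⟩ :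
      ∃ r, F r ∈ Submodule.span k (F '' Set.Iio r) ∧
        ∀ j, j < r → F j ∉ Submodule.span k (F '' Set.Iio j) :=
    ⟨Nat.find hex, Nat.find_spec hex, fun j hj => Nat.find_min hex hj⟩
  have hrpos : 0 < r := by
    rcases Nat.eq_zero_or_pos r with h0 | h; swap; exact h
    exfalso
    rw [h0] at hrspec
    have hemp : Set.Iio (0 : ℕ) = ∅ := by ext x; simp
    rw [hemp, Set.image_empty, Submodule.span_empty, Submodule.mem_bot] at hrspec
    exact hwne hrspec
  obtain ⟨r', rfl⟩ : ∃ r', r = r' + 1 := ⟨r - 1, by omega⟩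
  -- extract coefficients
  have himg : F '' Set.Iio (r' + 1) = Set.range (fun i : Fin (r' + 1) => F i.val) := by
    ext x
    constructor
    · rintro ⟨j, hj, rfl⟩
      exact ⟨⟨j, hj⟩, rfl⟩
    · rintro ⟨i, rfl⟩
      exact ⟨i.val, i.isLt, rfl⟩
  rw [himg, Finsupp.mem_span_range_iff_exists_finsupp] at hrspec
  obtain ⟨cf, hc⟩ := hrspec
  set c : Fin (r' + 1) → k := fun i => cf i with hcdef
  have hc : ∑ i : Fin (r' + 1), c i • F i.val = F (r' + 1) := by
    rw [← hc]
    exact (Finsupp.sum_fintype cf (fun i a => a • F i.val) (fun i => zero_smul k _)).symm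
  -- c 0 ≠ 0
  have hc0 : c 0 ≠ 0 := by
    intro h0
    choose d hd using fun i : Fin r' => exists_pow_eq (k := k) hq1 (c i.succ)
    have key : ψ (∑ i : Fin r', d i • F i.val) = ∑ i : Fin r', c i.succ • F (i.val + 1) := by
      rw [map_sum]
      refine Finset.sum_congr rfl fun i _ => ?_
      rw [hψs, hd, hF]
    have hFr : F (r' + 1) = ψ (∑ i : Fin r', d i • F i.val) := by
      rw [key, ← hc, Fin.sum_univ_succ, h0, zero_smul, zero_add]
      refine Finset.sum_congr rfl fun i _ => ?_
      rw [Fin.val_succ]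
    rw [hF] at hFr
    have heq := hψinj hFr
    apply hmin r' (Nat.lt_succ_self r')
    rw [heq]
    refine Submodule.sum_mem _ fun i _ => Submodule.smul_mem _ _ ?_
    exact Submodule.subset_span ⟨i.val, i.isLt, rfl⟩
  -- the polynomial recursion
  set ac : ℕ → k := fun j => if h : j < r' + 1 then c ⟨j, h⟩ else 0 with hac
  set E : ℕ → k[X] := fun i => Nat.rec (C (ac 0) * X ^ q)
    (fun i Ei => Ei ^ q + C (ac (i + 1)) * X ^ q) i with hE
  have hE0 : E 0 = C (ac 0) * X ^ q := rfl
  have hEs : ∀ i, E (i + 1) = E i ^ q + C (ac (i + 1)) * X ^ q := fun i => rfl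
  have hac0 : ac 0 = c 0 := by simp [hac]
  have hacsucc : ∀ i : Fin r', ac (i.val + 1) = c i.succ := by
    intro i
    have hlt : i.val + 1 < r' + 1 := by omega
    show (if h : i.val + 1 < r' + 1 then c ⟨i.val + 1, h⟩ else 0) = c i.succ
    rw [dif_pos hlt]
    exact congrArg c (Fin.ext rfl)
  have hEdeg : ∀ i, E i ≠ 0 ∧ (E i).natDegree = q ^ (i + 1) := by
    intro i
    induction i with
    | zero =>
      have hne : C (ac 0) ≠ 0 := by
        rw [hac0]; exact C_ne_zero.mpr hc0
      constructor
      · rw [hE0]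
        exact mul_ne_zero hne (pow_ne_zero _ X_ne_zero)
      · rw [hE0, natDegree_C_mul_X_pow q (ac 0) (by rw [hac0]; exact hc0), pow_one]
    | succ i ih =>
      have hlead : (E i).leadingCoeff ^ q ≠ 0 :=
        pow_ne_zero _ (leadingCoeff_ne_zero.mpr ih.1)
      have hpow : (E i ^ q).natDegree = q * (E i).natDegree := natDegree_pow' hlead
      have hpne : E i ^ q ≠ 0 := pow_ne_zero _ ih.1
      have hndpow : (E i ^ q).natDegree = q ^ (i + 2) := by
        rw [hpow, ih.2, ← pow_succ']
      have hsmall : (C (ac (i + 1)) * X ^ q).degree < (E i ^ q).degree := by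
        calc (C (ac (i + 1)) * X ^ q).degree
            ≤ ((C (ac (i + 1)) * X ^ q).natDegree : WithBot ℕ) := degree_le_natDegree
          _ ≤ (q : WithBot ℕ) := by
              exact_mod_cast natDegree_C_mul_X_pow_le (ac (i + 1)) q
          _ < ((q ^ (i + 2) : ℕ) : WithBot ℕ) := by
              have : q < q ^ (i + 2) := by
                calc q = q ^ 1 := (pow_one q).symm
                  _ < q ^ (i + 2) := Nat.pow_lt_pow_right hq1 (by omega)
              exact_mod_cast this
          _ = (E i ^ q).degree := by rw [degree_eq_natDegree hpne, hndpow]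
      have hdeg : (E (i + 1)).degree = (E i ^ q).degree := by
        rw [hEs]
        exact degree_add_eq_left_of_degree_lt hsmall
      have hne : E (i + 1) ≠ 0 := by
        intro h0
        rw [h0, degree_zero] at hdeg
        exact hpne (degree_eq_bot.mp hdeg.symm)
      exact ⟨hne, by rw [natDegree_eq_of_degree_eq hdeg, hndpow]⟩
  have hXdvd : ∀ i, (X : k[X]) ^ 2 ∣ E i := by
    intro i
    induction i with
    | zero =>
      rw [hE0]
      exact Dvd.dvd.mul_left (pow_dvd_pow X (by omega)) _
    | succ i ih =>
      rw [hEs]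
      exact dvd_add (ih.trans (dvd_pow_self (E i) hq0)) (Dvd.dvd.mul_left (pow_dvd_pow X (by omega)) _)
  obtain ⟨hpol, hhpol⟩ := hXdvd r'
  have hEne := (hEdeg r').1
  have hhne : hpol ≠ 0 := by
    intro h0
    apply hEne
    rw [hhpol, h0, mul_zero]
  have hXhne : (X * hpol : k[X]) ≠ 0 := mul_ne_zero X_ne_zero hhne
  have hdegXh : 0 < (X * hpol : k[X]).degree := by
    have hnd : 1 ≤ (X * hpol : k[X]).natDegree := by
      rw [natDegree_mul X_ne_zero hhne, natDegree_X]
      omega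
    rw [degree_eq_natDegree hXhne]
    exact_mod_cast hnd
  have hdegG : (X * hpol - 1 : k[X]).degree = (X * hpol : k[X]).degree :=
    degree_sub_eq_left_of_degree_lt (by rw [degree_one]; exact hdegXh)
  obtain ⟨t, ht⟩ := IsAlgClosed.exists_root (X * hpol - 1 : k[X])
    (by rw [hdegG]; exact ne_of_gt hdegXh)
  rw [IsRoot.def, eval_sub, eval_mul, eval_X, eval_one, sub_eq_zero] at ht
  have htne : t ≠ 0 := by
    intro h0
    rw [h0, zero_mul] at ht
    exact zero_ne_one ht
  have hEt : (E r').eval t = t := by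
    rw [hhpol, eval_mul, eval_pow, eval_X]
    calc t ^ 2 * hpol.eval t = t * (t * hpol.eval t) := by ring
      _ = t := by rw [ht, mul_one]
  set e : ℕ → k := fun i => (E i).eval t with he
  have he0 : e 0 = c 0 * t ^ q := by
    rw [he]
    show (E 0).eval t = c 0 * t ^ q
    rw [hE0, eval_mul, eval_C, eval_pow, eval_X, hac0]
  have hes : ∀ i, e (i + 1) = e i ^ q + ac (i + 1) * t ^ q := by
    intro i
    show (E (i + 1)).eval t = (E i).eval t ^ q + ac (i + 1) * t ^ q
    rw [hEs, eval_add, eval_pow, eval_mul, eval_C, eval_pow, eval_X]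
  have her : e r' = t := hEt
  refine ⟨∑ i : Fin (r' + 1), e i.val • F i.val, ?_, ?_⟩
  · -- nonzero
    intro h0
    apply hmin r' (Nat.lt_succ_self r')
    rw [Fin.sum_univ_castSucc] at h0
    simp only [Fin.coe_castSucc, Fin.val_last, her] at h0
    have hFr : F r' = ∑ i : Fin r', (-(t⁻¹ * e i.val)) • F i.val := by
      have h1 : t • F r' = -∑ i : Fin r', e i.val • F i.val := by
        rw [eq_neg_iff_add_eq_zero, add_comm]
        exact h0
      have h2 : F r' = t⁻¹ • (t • F r') := by
        rw [smul_smul, inv_mul_cancel₀ htne, one_smul]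
      rw [h2, h1, smul_neg, Finset.smul_sum, ← Finset.sum_neg_distrib]
      refine Finset.sum_congr rfl fun i _ => ?_
      rw [smul_smul, neg_smul]
    rw [hFr]
    refine Submodule.sum_mem _ fun i _ => Submodule.smul_mem _ _ ?_
    exact Submodule.subset_span ⟨i.val, i.isLt, rfl⟩
  · -- fixed vector property
    have hfix : ψ (∑ i : Fin (r' + 1), e i.val • F i.val) = ∑ i : Fin (r' + 1), e i.val • F i.val := by
      rw [map_sum]
      have hterm : ∀ i : Fin (r' + 1), ψ (e i.val • F i.val) = e i.val ^ q • F (i.val + 1) := by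
        intro i
        rw [hψs, ← hF]
      simp only [hterm]
      rw [Fin.sum_univ_castSucc]
      simp only [Fin.coe_castSucc, Fin.val_last, her]
      rw [← hc, Fin.sum_univ_succ, smul_add, smul_smul, Finset.smul_sum]
      conv_rhs => rw [Fin.sum_univ_succ]
      conv_lhs => rw [add_left_comm]
      congr 1
      · simp only [Fin.val_zero]
        rw [he0, mul_comm (t ^ q) (c 0)]
      · rw [← Finset.sum_add_distrib]
        refine Finset.sum_congr rfl fun i _ => ?_
        rw [Fin.val_succ, smul_smul, ← add_smul, hes, hacsucc, mul_comm (t ^ q) (c i.succ)]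
    have hfix' : (fun i => (∑ j : Fin (r' + 1), e j.val • F j.val) i ^ q) ᵥ* B⁻¹
        = ∑ j : Fin (r' + 1), e j.val • F j.val := hfix
    have h2 := congrArg (fun u => u ᵥ* B) hfix'
    simp only [Matrix.vecMul_vecMul, Matrix.nonsing_inv_mul B hB, Matrix.vecMul_one] at h2
    exact h2


end FieldAux

lemma exists_unit_row {K : Type*} [Field K] {N : ℕ} (r : Fin (N + 1) → K) (hr : r ≠ 0) :
    ∃ P : Matrix (Fin (N + 1)) (Fin (N + 1)) K, IsUnit P.det ∧ ∀ j, P 0 j = r j := by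
  classical
  have hli : LinearIndepOn K id ({r} : Set (Fin (N + 1) → K)) := by
    rw [linearIndepOn_singleton_iff]
    simpa using hr
  let b := Module.Basis.extend hli
  have hmem : r ∈ hli.extend (Set.subset_univ _) := hli.subset_extend _ rfl
  let e : hli.extend (Set.subset_univ _) ≃ Fin (N + 1) :=
    b.indexEquiv (Pi.basisFun K (Fin (N + 1)))
  let e' := e.trans (Equiv.swap (e ⟨r, hmem⟩) 0)
  let b' := b.reindex e'
  have hb'0 : b' 0 = r := by
    have h1 : e' ⟨r, hmem⟩ = 0 := by
      simp [e', Equiv.swap_apply_left]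
    have h2 : e'.symm 0 = ⟨r, hmem⟩ := by
      rw [← h1, Equiv.symm_apply_apply]
    rw [Module.Basis.reindex_apply, h2]
    exact Module.Basis.extend_apply_self hli ⟨r, hmem⟩
  refine ⟨(((Pi.basisFun K (Fin (N + 1))).toMatrix b')ᵀ : Matrix _ _ K), ?_, ?_⟩
  · rw [Matrix.det_transpose]
    have := (Pi.basisFun K (Fin (N + 1))).invertibleToMatrix b'
    exact (Matrix.isUnit_iff_isUnit_det _).mp (isUnit_of_invertible _)
  · intro j
    rw [Matrix.transpose_apply, Module.Basis.toMatrix_apply, Pi.basisFun_repr, hb'0]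

section FieldAux
variable {k : Type*} [Field k] [IsAlgClosed k] {q : ℕ}
variable (hadd : ∀ x y : k, (x + y) ^ q = x ^ q + y ^ q)
include hadd

/-- The `q`-power map as a ring hom. -/
def powQ (hq1 : 1 < q) : k →+* k where
  toFun x := x ^ q
  map_one' := one_pow q
  map_mul' x y := mul_pow x y q
  map_zero' := zero_pow (by omega)
  map_add' := hadd

/-- Lang's theorem for `GL_N` over an algebraically closed field. -/
lemma lang_matrix (hq1 : 1 < q) : ∀ {N : ℕ} (B : Matrix (Fin N) (Fin N) k), IsUnit B.det →
    ∃ A : Matrix (Fin N) (Fin N) k, IsUnit A.det ∧ A.map (fun x => x ^ q) = A * B := by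
  intro N
  induction N with
  | zero =>
    intro B _
    exact ⟨1, by simp, Subsingleton.elim _ _⟩
  | succ N IH =>
    intro B hB
    obtain ⟨r, hrne, hreq⟩ := exists_semilinear_fixed_vector hadd hq1 (Nat.succ_pos N) B hB
    obtain ⟨P, hPdet, hP0⟩ := exists_unit_row r hrne
    set mq : Matrix (Fin (N + 1)) (Fin (N + 1)) k →+* Matrix (Fin (N + 1)) (Fin (N + 1)) k :=
      (powQ hadd hq1).mapMatrix with hmq
    have hmapq : ∀ {M : Matrix (Fin (N + 1)) (Fin (N + 1)) k}, mq M = M.map (fun x => x ^ q) :=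
      fun {M} => rfl
    set Pq : Matrix (Fin (N + 1)) (Fin (N + 1)) k := P.map (fun x => x ^ q) with hPq
    have hPqdet : IsUnit Pq.det := by
      have : Pq = mq P := rfl
      rw [this, hmq, ← RingHom.map_det]
      exact hPdet.map (powQ hadd hq1)
    set C : Matrix (Fin (N + 1)) (Fin (N + 1)) k := P * B * Pq⁻¹ with hC
    -- row 0 of C is the standard basis vector
    have hrowP : P 0 = r := funext hP0
    have hrowPq : Pq 0 = fun i => r i ^ q := by
      funext j
      rw [hPq]
      show P 0 j ^ q = r j ^ q
      rw [hP0]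
    have hC0 : C 0 = Pi.single 0 1 := by
      have h1 : C 0 = (P * B * Pq⁻¹) 0 := rfl
      rw [h1, Matrix.mul_apply_eq_vecMul, Matrix.mul_apply_eq_vecMul, hrowP, ← hreq, ← hrowPq,
        ← (Matrix.single_one_vecMul (0 : Fin (N + 1)) Pq).trans (funext fun _ => rfl : Pq.row 0 = Pq 0), Matrix.vecMul_vecMul,
        Matrix.mul_nonsing_inv _ hPqdet, Matrix.vecMul_one]
    have hC0' : ∀ j : Fin N, C 0 j.succ = 0 := by
      intro j
      rw [hC0]
      exact Pi.single_eq_of_ne (Fin.succ_ne_zero j) 1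
    have hC00 : C 0 0 = 1 := by rw [hC0]; exact Pi.single_eq_same ..
    have hCdet : IsUnit C.det := by
      rw [hC, Matrix.det_mul, Matrix.det_mul]
      exact (hPdet.mul hB).mul (Matrix.isUnit_nonsing_inv_det _ hPqdet)
    set C₁ : Matrix (Fin N) (Fin N) k := C.submatrix Fin.succ Fin.succ with hC₁
    have hdetCC₁ : C.det = C₁.det := by
      rw [Matrix.det_succ_row_zero]
      rw [Finset.sum_eq_single 0]
      · rw [hC00, Fin.succAbove_zero]
        simp [hC₁]
      · intro j _ hj
        obtain ⟨j', rfl⟩ := Fin.exists_succ_eq.mpr (by simpa using hj)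
        rw [hC0' j', mul_zero, zero_mul]
      · intro h
        exact absurd (Finset.mem_univ _) h
    have hC₁det : IsUnit C₁.det := hdetCC₁ ▸ hCdet
    obtain ⟨A₁, hA₁det, hA₁eq⟩ := IH C₁ hC₁det
    -- solve the Artin-Schreier equations for the first column
    choose y hy using fun i : Fin N =>
      exists_pow_sub_eq (k := k) hq1 (∑ l, A₁ i l * C l.succ 0)
    -- assemble the block matrix
    set Q : Matrix (Fin (N + 1)) (Fin (N + 1)) k :=
      Matrix.of (fun i j =>
        Fin.cases (Fin.cases (1 : k) (fun _ => 0) j)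
          (fun i' => Fin.cases (y i') (fun j' => A₁ i' j') j) i) with hQdef
    have hQ00 : Q 0 0 = 1 := rfl
    have hQ0s : ∀ j : Fin N, Q 0 j.succ = 0 := fun j => by simp [hQdef]
    have hQs0 : ∀ i : Fin N, Q i.succ 0 = y i := fun i => by simp [hQdef]
    have hQss : ∀ i j : Fin N, Q i.succ j.succ = A₁ i j := fun i j => by simp [hQdef]
    have hQ0 : Q 0 = Pi.single 0 1 := by
      funext j
      refine Fin.cases ?_ ?_ j
      · rw [hQ00, Pi.single_eq_same]
      · intro j'
        rw [hQ0s j', Pi.single_eq_of_ne (Fin.succ_ne_zero j') 1]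
    have hQdet : IsUnit Q.det := by
      have : Q.det = A₁.det := by
        rw [Matrix.det_succ_row_zero]
        rw [Finset.sum_eq_single 0]
        · rw [hQ00, Fin.succAbove_zero]
          have : Q.submatrix Fin.succ Fin.succ = A₁ := by
            ext i j
            exact hQss i j
          rw [this]
          simp
        · intro j _ hj
          obtain ⟨j', rfl⟩ := Fin.exists_succ_eq.mpr (by simpa using hj)
          rw [hQ0s j', mul_zero, zero_mul]
        · intro h
          exact absurd (Finset.mem_univ _) h
      rw [this]
      exact hA₁det
    have hQC : Q.map (fun x => x ^ q) = Q * C := by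
      ext i j
      rw [Matrix.map_apply, Matrix.mul_apply, Fin.sum_univ_succ]
      refine Fin.cases ?_ ?_ i
      · refine Fin.cases ?_ ?_ j
        · rw [hQ00, hC00, one_pow, one_mul]
          rw [Finset.sum_eq_zero fun l _ => by rw [hQ0s l, zero_mul]]
          rw [add_zero]
        · intro j'
          rw [hQ0s j', hQ00, hC0' j', one_mul, zero_pow (by omega : q ≠ 0)]
          rw [Finset.sum_eq_zero fun l _ => by rw [hQ0s l, zero_mul], add_zero]
      · intro i'
        refine Fin.cases ?_ ?_ j
        · rw [hQs0 i', hC00, mul_one]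
          simp only [hQss]
          linear_combination hy i'
        · intro j'
          rw [hQss i' j', hQs0 i', hC0' j', mul_zero, zero_add]
          simp only [hQss]
          have h := Matrix.ext_iff.mpr hA₁eq i' j'
          simpa [Matrix.map_apply, Matrix.mul_apply, hC₁, Matrix.submatrix_apply] using h
    refine ⟨Q * P, ?_, ?_⟩
    · rw [Matrix.det_mul]
      exact hQdet.mul hPdet
    · have hmul : (Q * P).map (fun x => x ^ q) = Q.map (fun x => x ^ q) * Pq := by
        show mq (Q * P) = mq Q * mq P
        exact map_mul mq Q P
      rw [hmul, hQC, hC]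
      rw [← mul_assoc Q (P * B) Pq⁻¹, Matrix.nonsing_inv_mul_cancel_right _ _ hPqdet, ← mul_assoc]

/-- Surjectivity of the additive Lang map `X ↦ X^{(q)} - X·B`. -/
lemma lang_additive (hq1 : 1 < q) {N : ℕ} (B : Matrix (Fin N) (Fin N) k) (hB : IsUnit B.det)
    (D : Matrix (Fin N) (Fin N) k) :
    ∃ X : Matrix (Fin N) (Fin N) k, X.map (fun x => x ^ q) = X * B + D := by
  obtain ⟨V, hVdet, hVeq⟩ := lang_matrix hadd hq1 B hB
  have hVB : IsUnit (V * B).det := by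
    rw [Matrix.det_mul]
    exact hVdet.mul hB
  set W := D * (V * B)⁻¹ with hW
  choose Y hY using fun i j => exists_pow_sub_eq (k := k) hq1 (W i j)
  set Ym : Matrix (Fin N) (Fin N) k := Matrix.of (fun i j => Y i j) with hYm
  have hYmap : Ym.map (fun x => x ^ q) = Ym + W := by
    ext i j
    have h := hY i j
    simp only [Matrix.map_apply, Matrix.add_apply, hYm, Matrix.of_apply]
    linear_combination h
  refine ⟨Ym * V, ?_⟩
  have hmul : (Ym * V).map (fun x => x ^ q)
      = Ym.map (fun x => x ^ q) * V.map (fun x => x ^ q) :=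
    map_mul ((powQ hadd hq1).mapMatrix) Ym V
  rw [hmul, hYmap, hVeq, add_mul, ← mul_assoc, hW,
    Matrix.nonsing_inv_mul_cancel_right _ _ hVB]

end FieldAux

theorem stmt_1 (p : ℕ) [Fact p.Prime]
    (O : Type*) [CommRing O] [IsDomain O] [IsDiscreteValuationRing O]
    [IsAdicComplete (maximalIdeal O) O]
    [IsAlgClosed (ResidueField O)] [CharP (ResidueField O) p]
    (π : O) (hπ : Irreducible π)
    (σ : O ≃+* O) (hσπ : σ π = π)
    (n : ℕ) (hn : 1 ≤ n) (q : ℕ) (hq : q = p ^ n)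
    (hσres : ∀ x : O, residue O (σ x) = residue O x ^ q)
    (m : ℕ) :
    Function.Surjective
      (fun A : GL (Fin m) O =>
        A⁻¹ * Units.map (σ.toRingHom.mapMatrix : Matrix (Fin m) (Fin m) O →+* _).toMonoidHom A) := by
  classical
  intro Bgl
  have hp : p.Prime := Fact.out
  have hq1 : 1 < q := by
    rw [hq]
    exact Nat.one_lt_pow (by omega) hp.one_lt
  have haddk : ∀ x y : ResidueField O, (x + y) ^ q = x ^ q + y ^ q := by
    intro x y
    rw [hq]
    exact add_pow_char_pow x y p n
  have hdvd_res : ∀ x : O, residue O x = 0 ↔ π ∣ x := by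
    intro x
    rw [IsLocalRing.residue_eq_zero_iff, hπ.maximalIdeal_eq, Ideal.mem_span_singleton]
  have hσdvd : ∀ (s : ℕ) (x : O), π ^ s ∣ x → π ^ s ∣ σ x := by
    rintro s x ⟨y, rfl⟩
    exact ⟨σ y, by rw [_root_.map_mul, map_pow, hσπ]⟩
  set B : Matrix (Fin m) (Fin m) O := (Bgl : Matrix (Fin m) (Fin m) O) with hBdef
  have hBdet : IsUnit B.det := (Matrix.isUnit_iff_isUnit_det _).mp Bgl.isUnit
  set Bres : Matrix (Fin m) (Fin m) (ResidueField O) := B.map (residue O) with hBresdef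
  have hBresdet : IsUnit Bres.det := by
    rw [hBresdef, ← RingHom.mapMatrix_apply, ← RingHom.map_det]
    exact hBdet.map (residue O)
  -- the inductive improvement step
  have hstep : ∀ (s : ℕ), 1 ≤ s → ∀ A : Matrix (Fin m) (Fin m) O,
      (∀ i j, π ^ s ∣ (A.map ⇑σ - A * B) i j) →
      ∃ A' : Matrix (Fin m) (Fin m) O,
        (∀ i j, π ^ s ∣ (A' - A) i j) ∧
        (∀ i j, π ^ (s + 1) ∣ (A'.map ⇑σ - A' * B) i j) := by
    intro s hs A hA
    choose E hE using fun i j => hA i j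
    obtain ⟨X, hX⟩ := lang_additive haddk hq1 Bres hBresdet
      (-(Matrix.of (fun i j => residue O (E i j))))
    choose Yf hYf using fun i j => residue_surjective (R := O) (X i j)
    set Y : Matrix (Fin m) (Fin m) O := Matrix.of Yf with hYdef
    have hYres : ∀ i j, residue O (Y i j) = X i j := fun i j => hYf i j
    refine ⟨A + (π ^ s) • Y, ?_, ?_⟩
    · intro i j
      simp only [Matrix.add_apply, Matrix.smul_apply, add_sub_cancel_left, smul_eq_mul]
      exact Dvd.intro _ rfl
    · intro i j
      have hexpand : ((A + (π ^ s) • Y).map ⇑σ - (A + (π ^ s) • Y) * B) i j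
          = π ^ s * (E i j + (σ (Y i j) - ∑ l, Y i l * B l j)) := by
        have hE' := hE i j
        simp only [Matrix.sub_apply, Matrix.map_apply, Matrix.mul_apply] at hE'
        simp only [Matrix.sub_apply, Matrix.map_apply, Matrix.mul_apply, Matrix.add_apply,
          Matrix.smul_apply, smul_eq_mul, _root_.map_add, _root_.map_mul, map_pow, hσπ]
        have hsum : ∑ l, (A i l + π ^ s * Y i l) * B l j
            = (∑ l, A i l * B l j) + π ^ s * ∑ l, Y i l * B l j := by
          rw [Finset.mul_sum, ← Finset.sum_add_distrib]
          exact Finset.sum_congr rfl fun l _ => by ring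
        rw [hsum]
        linear_combination hE'
      rw [hexpand, pow_succ]
      apply mul_dvd_mul_left ((π : O) ^ s)
      rw [← hdvd_res]
      have hres : residue O (E i j + (σ (Y i j) - ∑ l, Y i l * B l j))
          = (Matrix.of (fun i j => residue O (E i j))) i j
            + ((X.map (fun x => x ^ q)) i j - (X * Bres) i j) := by
        rw [_root_.map_add, _root_.map_sub, hσres, hYres]
        congr 1
        congr 1
        rw [map_sum, Matrix.mul_apply]
        exact Finset.sum_congr rfl fun l _ => by rw [_root_.map_mul, hYres]; rfl
      rw [hres, hX]
      simp [Matrix.add_apply, Matrix.neg_apply]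
  -- base case
  obtain ⟨A0k, hA0det, hA0eq⟩ := lang_matrix haddk hq1 Bres hBresdet
  choose A0f hA0f using fun i j => residue_surjective (R := O) (A0k i j)
  set A0 : Matrix (Fin m) (Fin m) O := Matrix.of A0f with hA0def
  have hA0res : ∀ i j, residue O (A0 i j) = A0k i j := fun i j => hA0f i j
  have hA0good : ∀ i j, π ^ (0 + 1) ∣ (A0.map ⇑σ - A0 * B) i j := by
    intro i j
    rw [zero_add, pow_one, ← hdvd_res]
    have hres : residue O ((A0.map ⇑σ - A0 * B) i j)
        = (A0k.map (fun x => x ^ q)) i j - (A0k * Bres) i j := by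
      simp only [Matrix.sub_apply, Matrix.map_apply, Matrix.mul_apply, _root_.map_sub]
      rw [hσres, map_sum]
      congr 1
      · rw [hA0res]
      · exact Finset.sum_congr rfl fun l _ => by rw [_root_.map_mul, hA0res]; rfl
    rw [hres, hA0eq]
    simp
  -- the recursive sequence
  let T : (s : ℕ) → {A : Matrix (Fin m) (Fin m) O // ∀ i j, π ^ (s + 1) ∣ (A.map ⇑σ - A * B) i j} :=
    fun s => Nat.rec ⟨A0, hA0good⟩
      (fun s prev => ⟨(hstep (s + 1) (by omega) prev.1 prev.2).choose,
        (hstep (s + 1) (by omega) prev.1 prev.2).choose_spec.2⟩) s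
  set f : ℕ → Matrix (Fin m) (Fin m) O := fun s => (T s).1 with hfdef
  have hfgood : ∀ s, ∀ i j, π ^ (s + 1) ∣ ((f s).map ⇑σ - f s * B) i j := fun s => (T s).2
  have hfstep : ∀ s, ∀ i j, π ^ (s + 1) ∣ (f (s + 1) - f s) i j := by
    intro s
    exact (hstep (s + 1) (by omega) (f s) (T s).2).choose_spec.1
  -- Cauchy property
  have hcauchy : ∀ {a b : ℕ}, a ≤ b → ∀ i j, π ^ a ∣ (f b - f a) i j := by
    intro a b hab
    induction b, hab using Nat.le_induction with
    | base => intro i j; simp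
    | succ b hab ih =>
      intro i j
      have h1 : π ^ a ∣ (f (b + 1) - f b) i j :=
        (pow_dvd_pow π (by omega)).trans (hfstep b i j)
      have h2 := ih i j
      have h3 : (f (b + 1) - f a) i j = (f (b + 1) - f b) i j + (f b - f a) i j := by
        simp only [Matrix.sub_apply]
        ring
      rw [h3]
      exact dvd_add h1 h2
  -- pass to the limit
  have hsm : ∀ (x y : O) (s : ℕ),
      (x ≡ y [SMOD ((maximalIdeal O) ^ s • ⊤ : Submodule O O)]) ↔ π ^ s ∣ x - y := by
    intro x y s
    rw [SModEq.sub_mem, smul_eq_mul, Ideal.mul_top, hπ.maximalIdeal_eq,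
      Ideal.span_singleton_pow, Ideal.mem_span_singleton]
  choose Lf hLf using fun i j =>
    IsPrecomplete.prec (IsAdicComplete.toIsPrecomplete (I := maximalIdeal O) (M := O))
      (f := fun s => f s i j)
      (by
        intro a b hab
        rw [hsm]
        have h1 := hcauchy hab i j
        rw [Matrix.sub_apply] at h1
        exact dvd_sub_comm.mp h1)
  set Lm : Matrix (Fin m) (Fin m) O := Matrix.of (fun i j => Lf i j) with hLmdef
  have hLdvd : ∀ s i j, π ^ s ∣ (Lm - f s) i j := by
    intro s i j
    have h1 := hLf i j s
    rw [hsm] at h1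
    rw [Matrix.sub_apply]
    exact dvd_sub_comm.mp h1
  -- the limit satisfies the equation
  have hLeq : Lm.map ⇑σ = Lm * B := by
    rw [← sub_eq_zero]
    ext i j
    rw [Matrix.zero_apply]
    refine IsHausdorff.haus (IsAdicComplete.toIsHausdorff (I := maximalIdeal O) (M := O)) _ ?_
    intro s
    rw [hsm, sub_zero]
    -- decompose the entry into three π^s-divisible pieces
    have h1 : π ^ s ∣ σ ((Lm - f s) i j) := hσdvd s _ (hLdvd s i j)
    have h2 : π ^ s ∣ ((f s).map ⇑σ - f s * B) i j :=
      (pow_dvd_pow π (by omega)).trans (hfgood s i j)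
    have h3 : π ^ s ∣ ((f s - Lm) * B) i j := by
      rw [Matrix.mul_apply]
      refine Finset.dvd_sum fun l _ => ?_
      have h4 : π ^ s ∣ (f s - Lm) i l := by
        rw [Matrix.sub_apply]
        have := hLdvd s i l
        rw [Matrix.sub_apply] at this
        exact dvd_sub_comm.mp this
      exact h4.mul_right _
    have hsplit : (Lm.map ⇑σ - Lm * B) i j
        = σ ((Lm - f s) i j) + ((f s).map ⇑σ - f s * B) i j + ((f s - Lm) * B) i j := by
      have hsum : ((f s - Lm) * B) i j = (∑ l, f s i l * B l j) - ∑ l, Lm i l * B l j := by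
        rw [Matrix.mul_apply, ← Finset.sum_sub_distrib]
        exact Finset.sum_congr rfl fun l _ => by rw [Matrix.sub_apply, sub_mul]
      rw [hsum]
      simp only [Matrix.sub_apply, Matrix.map_apply, Matrix.mul_apply, _root_.map_sub]
      ring
    rw [hsplit]
    exact dvd_add (dvd_add h1 h2) h3
  -- the limit is invertible
  have hLres : ∀ i j, residue O (Lm i j) = A0k i j := by
    intro i j
    have h1 : π ∣ (Lm - f 0) i j := by
      have ha := hLdvd 1 i j
      have hb := hfstep 0 i j
      rw [pow_one] at ha hb
      have hc : (Lm - f 0) i j = (Lm - f 1) i j + (f 1 - f 0) i j := by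
        simp only [Matrix.sub_apply]; ring
      rw [hc]
      exact dvd_add ha hb
    rw [Matrix.sub_apply] at h1
    rw [← hdvd_res, _root_.map_sub, sub_eq_zero] at h1
    rw [h1]
    exact hA0res i j
  have hLdet : IsUnit Lm.det := by
    rw [← IsLocalRing.notMem_maximalIdeal]
    intro hmem
    have h0 : residue O Lm.det = 0 := (IsLocalRing.residue_eq_zero_iff _).mpr hmem
    have h1 : residue O Lm.det = A0k.det := by
      rw [RingHom.map_det]
      congr 1
      ext i j
      exact hLres i j
    rw [h1] at h0
    exact hA0det.ne_zero h0
  -- conclude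
  have hLunit : IsUnit Lm := (Matrix.isUnit_iff_isUnit_det _).mpr hLdet
  refine ⟨hLunit.unit, ?_⟩
  have hinv : ((hLunit.unit⁻¹ : (Matrix (Fin m) (Fin m) O)ˣ) : Matrix (Fin m) (Fin m) O) * Lm = 1 := by
    have h := Units.inv_mul hLunit.unit
    rw [IsUnit.unit_spec] at h
    exact h
  apply Units.ext
  show ((hLunit.unit⁻¹ * Units.map _ hLunit.unit : (Matrix (Fin m) (Fin m) O)ˣ) :
    Matrix (Fin m) (Fin m) O) = (Bgl : Matrix (Fin m) (Fin m) O)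
  rw [Units.val_mul, Units.coe_map]
  have hmapval : (σ.toRingHom.mapMatrix : Matrix (Fin m) (Fin m) O →+* _).toMonoidHom
      ((hLunit.unit : (Matrix (Fin m) (Fin m) O)ˣ) : Matrix (Fin m) (Fin m) O) = Lm.map ⇑σ := by
    rw [IsUnit.unit_spec]
    rfl
  rw [hmapval, hLeq, ← mul_assoc, hinv, one_mul]
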